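/- Assume d = 4k+2 (k ≥ 1), q ≡ 3 mod 4, and let S_0 ⊂ F_q^d be the zero-radius sphere. Then for any G ⊂ F_q^d, the quantity q^{−1}|G|² − q^{−(d+2)/2}(q−1) Σ_{‖x‖=0} |1̂_G(x)|² + q^{−(d+2)/2} Σ_{‖x‖≠0} |1̂_G(x)|² equals the number of pairs (m, m') ∈ G × G with m − m' ∈ S_0, and in particular is nonnegative. -/

import Mathlib

open Finset

set_option linter.unusedSectionVars false
set_option linter.unusedVariables false
set_option maxHeartbeats 1000000

namespace CountingZeroSphereAux

variable {F : Type} [Field F] [Fintype F] [DecidableEq F]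

noncomputable def qcc (F : Type) [Field F] [Fintype F] [DecidableEq F] : MulChar F ℂ :=
  (quadraticChar F).ringHomComp (Int.castRingHom ℂ)

lemma qcc_apply (a : F) : qcc F a = ((quadraticChar F a : ℤ) : ℂ) := rfl

lemma qcc_mul_self {a : F} (ha : a ≠ 0) : qcc F a * qcc F a = 1 := by
  rw [qcc_apply, ← Int.cast_mul, ← sq, quadraticChar_sq_one ha, Int.cast_one]

lemma char_map_sum {ι : Type*} (χ : AddChar F ℂ) (s : Finset ι) (f : ι → F) :
    χ (∑ i ∈ s, f i) = ∏ i ∈ s, χ (f i) := by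
  induction s using Finset.cons_induction with
  | empty => simp
  | cons a s ha ih => rw [Finset.sum_cons, Finset.prod_cons, AddChar.map_add_eq_mul, ih]

lemma sum_char_mul (χ : AddChar F ℂ) (hχ : χ ≠ 1) (b : F) :
    ∑ s : F, χ (s * b) = if b = 0 then (Fintype.card F : ℂ) else 0 := by
  rw [AddChar.sum_mulShift b (AddChar.IsPrimitive.of_ne_one hχ)]
  push_cast
  rfl

lemma sum_char_dot (χ : AddChar F ℂ) (hχ : χ ≠ 1) {d : ℕ} (y : Fin d → F) :
    ∑ x : Fin d → F, χ (-∑ i, x i * y i) = if y = 0 then ((Fintype.card F : ℂ)) ^ d else 0 := by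
  have h1 : ∀ x : Fin d → F, χ (-∑ i, x i * y i) = ∏ i, χ (x i * (- y i)) := by
    intro x
    rw [← char_map_sum]
    congr 1
    simp [mul_neg]
  calc ∑ x : Fin d → F, χ (-∑ i, x i * y i)
      = ∑ x ∈ Fintype.piFinset (fun _ : Fin d => (univ : Finset F)), ∏ i, χ (x i * (- y i)) := by
        rw [Fintype.piFinset_univ]; exact Finset.sum_congr rfl (fun x _ => h1 x)
    _ = ∏ i, ∑ t : F, χ (t * (- y i)) := Finset.sum_prod_piFinset univ (fun i t => χ (t * (- y i)))
    _ = ∏ i, if y i = 0 then (Fintype.card F : ℂ) else 0 := by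
        refine Finset.prod_congr rfl fun i _ => ?_
        rw [sum_char_mul χ hχ]
        simp [neg_eq_zero]
    _ = if y = 0 then ((Fintype.card F : ℂ)) ^ d else 0 := by
        by_cases hy : y = 0
        · simp [hy, Finset.card_univ]
        · obtain ⟨i, hi⟩ : ∃ i, y i ≠ 0 := by
            by_contra h; push_neg at h; exact hy (funext h)
          rw [if_neg hy]
          exact Finset.prod_eq_zero (mem_univ i) (by rw [if_neg hi])

lemma sum_char_sq (χ : AddChar F ℂ) (hχ : χ ≠ 1) (hF2 : ringChar F ≠ 2) {s : F} (hs : s ≠ 0) :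
    ∑ u : F, χ (s * u ^ 2) = qcc F s * gaussSum (qcc F) χ := by
  have step1 : ∑ u : F, χ (s * u ^ 2)
      = ∑ v : F, ∑ u ∈ univ.filter (fun u : F => u ^ 2 = v), χ (s * u ^ 2) :=
    (Finset.sum_fiberwise_of_maps_to (fun x _ => mem_univ _) _).symm
  have hcard : ∀ v : F, (((univ.filter (fun u : F => u ^ 2 = v)).card : ℤ))
      = quadraticChar F v + 1 := by
    intro v
    rw [show (univ.filter (fun u : F => u ^ 2 = v)) = {x : F | x ^ 2 = v}.toFinset by
      simp [Set.toFinset_setOf]]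
    exact_mod_cast quadraticChar_card_sqrts hF2 v
  have step2 : ∀ v : F, ∑ u ∈ univ.filter (fun u : F => u ^ 2 = v), χ (s * u ^ 2)
      = (qcc F v + 1) * χ (s * v) := by
    intro v
    rw [Finset.sum_congr rfl (fun u hu => by rw [(mem_filter.mp hu).2]), Finset.sum_const,
      nsmul_eq_mul]
    congr 1
    rw [qcc_apply]
    exact_mod_cast congrArg (fun z : ℤ => (z : ℂ)) (hcard v)
  rw [step1]
  rw [Finset.sum_congr rfl fun v _ => step2 v]
  have expand : ∑ v : F, (qcc F v + 1) * χ (s * v)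
      = (∑ v : F, qcc F v * χ (s * v)) + ∑ v : F, χ (s * v) := by
    rw [← Finset.sum_add_distrib]
    exact Finset.sum_congr rfl fun v _ => by ring
  rw [expand]
  have h0 : ∑ v : F, χ (s * v) = 0 := by
    rw [Finset.sum_congr rfl fun v (_ : v ∈ univ) => by rw [mul_comm s v], sum_char_mul χ hχ s,
      if_neg hs]
  have hgs : ∑ v : F, qcc F v * χ (s * v) = gaussSum (qcc F) (χ.mulShift s) := by
    unfold gaussSum
    exact Finset.sum_congr rfl fun v _ => by rw [AddChar.mulShift_apply]
  have hms := gaussSum_mulShift (qcc F) χ (Units.mk0 s hs)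
  have : qcc F s * gaussSum (qcc F) (χ.mulShift s) = gaussSum (qcc F) χ := by
    simpa using hms
  rw [h0, add_zero, hgs, ← this, ← mul_assoc, qcc_mul_self hs, one_mul]

lemma sum_char_quad (χ : AddChar F ℂ) (hχ : χ ≠ 1) (hF2 : ringChar F ≠ 2)
    {s : F} (hs : s ≠ 0) (b : F) :
    ∑ t : F, χ (s * t ^ 2 + b * t)
      = χ (-(b ^ 2) * (4 * s)⁻¹) * (qcc F s * gaussSum (qcc F) χ) := by
  have h2 : (2 : F) ≠ 0 := Ring.two_ne_zero hF2
  have h2s : (2 : F) * s ≠ 0 := mul_ne_zero h2 hs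
  have h4 : (4 : F) ≠ 0 := by
    intro h
    apply h2
    have h22 : (2 : F) * 2 = 0 := by rw [show (2:F)*2 = 4 by norm_num, h]
    rcases mul_eq_zero.mp h22 with h' | h' <;> exact h'
  have h4s : (4 : F) * s ≠ 0 := mul_ne_zero h4 hs
  have key : ∀ t : F, s * t ^ 2 + b * t
      = s * (t + b * (2 * s)⁻¹) ^ 2 + (-(b ^ 2) * (4 * s)⁻¹) := by
    intro t
    field_simp
    ring
  calc ∑ t : F, χ (s * t ^ 2 + b * t)
      = ∑ u : F, χ (s * u ^ 2 + (-(b ^ 2) * (4 * s)⁻¹)) := by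
        refine Fintype.sum_equiv (Equiv.addRight (b * (2 * s)⁻¹)) _ _ fun t => ?_
        rw [key t]
        rfl
    _ = χ (-(b ^ 2) * (4 * s)⁻¹) * ∑ u : F, χ (s * u ^ 2) := by
        rw [Finset.mul_sum]
        exact Finset.sum_congr rfl fun u _ => by
          rw [AddChar.map_add_eq_mul, mul_comm]
    _ = χ (-(b ^ 2) * (4 * s)⁻¹) * (qcc F s * gaussSum (qcc F) χ) := by
        rw [sum_char_sq χ hχ hF2 hs]

lemma sum_char_quad_vec (χ : AddChar F ℂ) (hχ : χ ≠ 1) (hF2 : ringChar F ≠ 2)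
    {s : F} (hs : s ≠ 0) {d : ℕ} (hd : Even d) (y : Fin d → F) :
    ∑ x : Fin d → F, χ (s * (∑ i, x i * x i) + ∑ i, (- y i) * x i)
      = (gaussSum (qcc F) χ) ^ d * χ (-(∑ i, y i * y i) * (4 * s)⁻¹) := by
  have h1 : ∀ x : Fin d → F, χ (s * (∑ i, x i * x i) + ∑ i, (- y i) * x i)
      = ∏ i, χ (s * (x i) ^ 2 + (- y i) * x i) := by
    intro x
    rw [← char_map_sum]
    congr 1
    rw [Finset.mul_sum, ← Finset.sum_add_distrib]
    exact Finset.sum_congr rfl fun i _ => by ring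
  calc ∑ x : Fin d → F, χ (s * (∑ i, x i * x i) + ∑ i, (- y i) * x i)
      = ∑ x ∈ Fintype.piFinset (fun _ : Fin d => (univ : Finset F)),
          ∏ i, χ (s * (x i) ^ 2 + (- y i) * x i) := by
        rw [Fintype.piFinset_univ]; exact Finset.sum_congr rfl fun x _ => h1 x
    _ = ∏ i, ∑ t : F, χ (s * t ^ 2 + (- y i) * t) :=
        Finset.sum_prod_piFinset univ (fun i t => χ (s * t ^ 2 + (- y i) * t))
    _ = ∏ i, (χ (-((y i) ^ 2) * (4 * s)⁻¹) * (qcc F s * gaussSum (qcc F) χ)) := by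
        refine Finset.prod_congr rfl fun i _ => ?_
        rw [sum_char_quad χ hχ hF2 hs (- y i), neg_sq]
    _ = (gaussSum (qcc F) χ) ^ d * χ (-(∑ i, y i * y i) * (4 * s)⁻¹) := by
        rw [Finset.prod_mul_distrib, Finset.prod_const, card_univ, Fintype.card_fin]
        have hql : (qcc F s * gaussSum (qcc F) χ) ^ d
            = (gaussSum (qcc F) χ) ^ d := by
          obtain ⟨m, hm⟩ := hd
          rw [mul_pow, hm, ← two_mul, pow_mul, sq, qcc_mul_self hs, one_pow, one_mul]
        rw [hql, ← char_map_sum]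
        rw [mul_comm]
        congr 1
        rw [← Finset.sum_mul]
        congr 1
        simp [pow_two]

lemma sum_char_inv (χ : AddChar F ℂ) (hχ : χ ≠ 1) (c : F) :
    ∑ s ∈ univ.erase (0 : F), χ (c * s⁻¹)
      = (if c = 0 then (Fintype.card F : ℂ) else 0) - 1 := by
  have h0 : ∑ s : F, χ (c * s⁻¹) = ∑ s : F, χ (c * s) :=
    Fintype.sum_bijective (fun s : F => s⁻¹) inv_involutive.bijective _ _ (fun s => rfl)
  have h1 : ∑ s : F, χ (c * s⁻¹) = χ (c * (0 : F)⁻¹) + ∑ s ∈ univ.erase 0, χ (c * s⁻¹) :=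
    (Finset.add_sum_erase univ _ (mem_univ 0)).symm
  have h2 : ∑ s : F, χ (c * s) = if c = 0 then (Fintype.card F : ℂ) else 0 := by
    rw [Finset.sum_congr rfl fun v (_ : v ∈ univ) => by rw [mul_comm c v]]
    exact sum_char_mul χ hχ c
  have h3 : χ (c * (0 : F)⁻¹) = 1 := by rw [inv_zero, mul_zero, AddChar.map_zero_eq_one]
  rw [h0, h2, h3] at h1
  rw [eq_sub_iff_add_eq, add_comm]
  exact h1.symm

lemma ringChar_ne_two (hq : Fintype.card F % 4 = 3) : ringChar F ≠ 2 := by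
  intro h
  have := FiniteField.even_card_of_char_two h
  omega

lemma gauss_pow (χ : AddChar F ℂ) (hχ : χ ≠ 1) (hq : Fintype.card F % 4 = 3) (k : ℕ) :
    (gaussSum (qcc F) χ) ^ (4 * k + 2) = -((Fintype.card F : ℂ) ^ (2 * k + 1)) := by
  have hF2 : ringChar F ≠ 2 := ringChar_ne_two hq
  have hη1 : (qcc F) ≠ 1 :=
    (MulChar.ringHomComp_ne_one_iff (RingHom.injective_int _)).mpr (quadraticChar_ne_one hF2)
  have hquad : (qcc F).IsQuadratic := (quadraticChar_isQuadratic F).comp _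
  have hsq : gaussSum (qcc F) χ ^ 2 = qcc F (-1) * (Fintype.card F : ℂ) :=
    gaussSum_sq hη1 hquad (AddChar.IsPrimitive.of_ne_one hχ)
  have hodd : Fintype.card F % 2 = 1 := by omega
  have hneg : qcc F (-1) = -1 := by
    show ((quadraticChar F (-1) : ℤ) : ℂ) = -1
    rw [quadraticChar_neg_one hF2, ZMod.χ₄_nat_eq_if_mod_four, if_neg (by omega), if_neg (by omega)]
    norm_num
  rw [show 4 * k + 2 = 2 * (2 * k + 1) by ring, pow_mul, hsq, hneg, neg_one_mul,
    Odd.neg_pow ⟨k, by ring⟩]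

lemma qT (χ : AddChar F ℂ) (hχ : χ ≠ 1) (hq : Fintype.card F % 4 = 3) (k : ℕ)
    (y : Fin (4 * k + 2) → F) :
    (Fintype.card F : ℂ) *
        ∑ x ∈ univ.filter (fun x : Fin (4 * k + 2) → F => ∑ i, x i * x i = 0),
          χ (-∑ i, x i * y i)
      = (if y = 0 then (Fintype.card F : ℂ) ^ (4 * k + 2) else 0)
        - (Fintype.card F : ℂ) ^ (2 * k + 1) *
            (if (∑ i, y i * y i) = 0 then ((Fintype.card F : ℂ) - 1) else -1) := by
  have hF2 : ringChar F ≠ 2 := ringChar_ne_two hq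
  have h2 : (2 : F) ≠ 0 := Ring.two_ne_zero hF2
  have h4 : (4 : F) ≠ 0 := by
    intro h
    apply h2
    have h22 : (2 : F) * 2 = 0 := by rw [show (2:F)*2 = 4 by norm_num, h]
    rcases mul_eq_zero.mp h22 with h' | h' <;> exact h'
  have hflip : ∀ x : Fin (4 * k + 2) → F, (∑ i, (- y i) * x i) = -∑ i, x i * y i := by
    intro x
    rw [← Finset.sum_neg_distrib]
    exact Finset.sum_congr rfl fun i _ => by ring
  -- the double sum
  have double : ∑ s : F, ∑ x : Fin (4 * k + 2) → F,
        χ (s * (∑ i, x i * x i) + ∑ i, (- y i) * x i)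
      = (Fintype.card F : ℂ) *
          ∑ x ∈ univ.filter (fun x : Fin (4 * k + 2) → F => ∑ i, x i * x i = 0),
            χ (-∑ i, x i * y i) := by
    rw [Finset.sum_comm]
    have inner : ∀ x : Fin (4 * k + 2) → F,
        ∑ s : F, χ (s * (∑ i, x i * x i) + ∑ i, (- y i) * x i)
          = (if (∑ i, x i * x i) = 0 then (Fintype.card F : ℂ) else 0)
              * χ (-∑ i, x i * y i) := by
      intro x
      rw [Finset.sum_congr rfl fun s (_ : s ∈ univ) => AddChar.map_add_eq_mul χ _ _,
        ← Finset.sum_mul, sum_char_mul χ hχ, hflip x]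
    rw [Finset.sum_congr rfl fun x _ => inner x]
    rw [Finset.mul_sum, Finset.sum_filter]
    exact Finset.sum_congr rfl fun x _ => by split_ifs <;> simp
  rw [← double]
  -- split off s = 0
  rw [← Finset.add_sum_erase univ _ (mem_univ (0 : F))]
  have hzero : ∑ x : Fin (4 * k + 2) → F,
      χ ((0 : F) * (∑ i, x i * x i) + ∑ i, (- y i) * x i)
      = if y = 0 then (Fintype.card F : ℂ) ^ (4 * k + 2) else 0 := by
    rw [← sum_char_dot χ hχ y]
    exact Finset.sum_congr rfl fun x _ => by rw [zero_mul, zero_add, hflip x]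
  have hrest : ∑ s ∈ univ.erase (0 : F), ∑ x : Fin (4 * k + 2) → F,
      χ (s * (∑ i, x i * x i) + ∑ i, (- y i) * x i)
      = - ((Fintype.card F : ℂ) ^ (2 * k + 1)) *
          ((if (∑ i, y i * y i) = 0 then (Fintype.card F : ℂ) else 0) - 1) := by
    have step : ∀ s ∈ univ.erase (0 : F), ∑ x : Fin (4 * k + 2) → F,
        χ (s * (∑ i, x i * x i) + ∑ i, (- y i) * x i)
        = - ((Fintype.card F : ℂ) ^ (2 * k + 1)) *
            χ ((-(∑ i, y i * y i) * 4⁻¹) * s⁻¹) := by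
      intro s hs
      have hs0 : s ≠ 0 := (Finset.mem_erase.mp hs).1
      rw [sum_char_quad_vec χ hχ hF2 hs0 ⟨2 * k + 1, by ring⟩ y, gauss_pow χ hχ hq k]
      congr 2
      rw [mul_inv, mul_assoc]
    rw [Finset.sum_congr rfl step, ← Finset.mul_sum, sum_char_inv χ hχ]
    congr 2
    simp [h4]
  rw [hzero, hrest]
  have : (if (∑ i, y i * y i) = 0 then (Fintype.card F : ℂ) else 0) - 1
      = if (∑ i, y i * y i) = 0 then ((Fintype.card F : ℂ) - 1) else -1 := by
    split_ifs <;> ring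
  rw [this]
  ring

lemma pointwise (χ : AddChar F ℂ) (hχ : χ ≠ 1) (hq : Fintype.card F % 4 = 3) (k : ℕ)
    (y : Fin (4 * k + 2) → F) :
    (Fintype.card F : ℂ)⁻¹
      - ((Fintype.card F : ℂ) ^ (2 * k + 2))⁻¹ * ((Fintype.card F : ℂ) - 1) *
          ∑ x ∈ univ.filter (fun x : Fin (4 * k + 2) → F => ∑ i, x i * x i = 0),
            χ (-∑ i, x i * y i)
      + ((Fintype.card F : ℂ) ^ (2 * k + 2))⁻¹ *
          ∑ x ∈ univ.filter (fun x : Fin (4 * k + 2) → F => ¬(∑ i, x i * x i = 0)),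
            χ (-∑ i, x i * y i)
      = if (∑ i, y i * y i) = 0 then 1 else 0 := by
  have hq0 : (Fintype.card F : ℂ) ≠ 0 := Nat.cast_ne_zero.mpr Fintype.card_ne_zero
  set T := ∑ x ∈ univ.filter (fun x : Fin (4 * k + 2) → F => ∑ i, x i * x i = 0),
      χ (-∑ i, x i * y i) with hTdef
  set U := ∑ x ∈ univ.filter (fun x : Fin (4 * k + 2) → F => ¬(∑ i, x i * x i = 0)),
      χ (-∑ i, x i * y i) with hUdef
  set D := (if y = 0 then (Fintype.card F : ℂ) ^ (4 * k + 2) else 0) with hDdef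
  set E := (if (∑ i, y i * y i) = 0 then ((Fintype.card F : ℂ) - 1) else -1) with hEdef
  have hTU : T + U = D := by
    rw [hTdef, hUdef, Finset.sum_filter_add_sum_filter_not]
    exact sum_char_dot χ hχ y
  have hT : (Fintype.card F : ℂ) * T = D - (Fintype.card F : ℂ) ^ (2 * k + 1) * E :=
    qT χ hχ hq k y
  have hTv : T = (Fintype.card F : ℂ)⁻¹ * (D - (Fintype.card F : ℂ) ^ (2 * k + 1) * E) := by
    rw [← hT, inv_mul_cancel_left₀ hq0]
  have hUv : U = D - T := by rw [← hTU]; ring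
  rw [hUv, hTv]
  by_cases hy : (∑ i, y i * y i) = 0
  · rw [hEdef, if_pos hy, if_pos hy]
    field_simp
    ring
  · rw [hEdef, if_neg hy, if_neg hy]
    field_simp
    ring

end CountingZeroSphereAux

open CountingZeroSphereAux

/-- For `d = 4k+2`, `k ≥ 1`, `q ≡ 3 mod 4`, and any `G ⊂ F_q^d`, the quantity
`q^{−1}|G|² − q^{−(d+2)/2}(q−1) Σ_{‖x‖=0} |1̂_G(x)|² + q^{−(d+2)/2} Σ_{‖x‖≠0} |1̂_G(x)|²`
equals the number of pairs `(m, m') ∈ G × G` with `m − m' ∈ S_0`; in particular it is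
nonnegative. -/
theorem counting_identity_zero_sphere
    (F : Type) [Field F] [Fintype F] [DecidableEq F]
    (hq : Fintype.card F % 4 = 3)
    (χ : AddChar F ℂ) (hχ : χ ≠ 1) (k : ℕ) (hk : 1 ≤ k)
    (G : Finset (Fin (4 * k + 2) → F)) :
    ((Fintype.card F : ℝ))⁻¹ * (G.card : ℝ) ^ 2 -
        ((Fintype.card F : ℝ) ^ (2 * k + 2))⁻¹ * ((Fintype.card F : ℝ) - 1) *
          ∑ x ∈ Finset.univ.filter (fun x : Fin (4 * k + 2) → F => ∑ i, x i * x i = 0),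
            ‖∑ m ∈ G, χ (-∑ i, x i * m i)‖ ^ 2 +
        ((Fintype.card F : ℝ) ^ (2 * k + 2))⁻¹ *
          ∑ x ∈ Finset.univ.filter (fun x : Fin (4 * k + 2) → F => ∑ i, x i * x i ≠ 0),
            ‖∑ m ∈ G, χ (-∑ i, x i * m i)‖ ^ 2 =
      ((G ×ˢ G).filter
          (fun mm : (Fin (4 * k + 2) → F) × (Fin (4 * k + 2) → F) =>
            ∑ i, (mm.1 i - mm.2 i) * (mm.1 i - mm.2 i) = 0)).card ∧
    0 ≤ ((Fintype.card F : ℝ))⁻¹ * (G.card : ℝ) ^ 2 -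
        ((Fintype.card F : ℝ) ^ (2 * k + 2))⁻¹ * ((Fintype.card F : ℝ) - 1) *
          ∑ x ∈ Finset.univ.filter (fun x : Fin (4 * k + 2) → F => ∑ i, x i * x i = 0),
            ‖∑ m ∈ G, χ (-∑ i, x i * m i)‖ ^ 2 +
        ((Fintype.card F : ℝ) ^ (2 * k + 2))⁻¹ *
          ∑ x ∈ Finset.univ.filter (fun x : Fin (4 * k + 2) → F => ∑ i, x i * x i ≠ 0),
            ‖∑ m ∈ G, χ (-∑ i, x i * m i)‖ ^ 2 := by
  have hchar : 0 < ringChar F :=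
    Nat.pos_of_ne_zero (CharP.char_ne_zero_of_finite F (ringChar F))
  -- norm-square expansion
  have key : ∀ x : Fin (4 * k + 2) → F,
      ((‖∑ m ∈ G, χ (-∑ i, x i * m i)‖ : ℝ) : ℂ) ^ 2
        = ∑ p ∈ G ×ˢ G, χ (-∑ i, x i * (p.1 i - p.2 i)) := by
    intro x
    set z := ∑ m ∈ G, χ (-∑ i, x i * m i) with hz
    have h1 : ((‖z‖ : ℝ) : ℂ) ^ 2 = z * (starRingEnd ℂ) z := by
      rw [Complex.mul_conj]
      norm_cast
      rw [← Complex.sq_norm]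
    have h2 : (starRingEnd ℂ) z = ∑ m ∈ G, χ (∑ i, x i * m i) := by
      rw [hz, map_sum]
      exact Finset.sum_congr rfl fun m _ => by
        rw [AddChar.starComp_apply hchar, AddChar.inv_apply, neg_neg]
    rw [h1, h2, hz, Finset.sum_mul_sum, ← Finset.sum_product']
    refine Finset.sum_congr rfl fun p _ => ?_
    rw [← AddChar.map_add_eq_mul]
    congr 1
    have hsub : ∑ i, x i * (p.1 i - p.2 i) = (∑ i, x i * p.1 i) - ∑ i, x i * p.2 i := by
      rw [← Finset.sum_sub_distrib]
      exact Finset.sum_congr rfl fun i _ => mul_sub _ _ _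
    rw [hsub]
    ring
  have hq0 : (Fintype.card F : ℂ) ≠ 0 := Nat.cast_ne_zero.mpr Fintype.card_ne_zero
  -- the complex-valued identity
  have main : ((Fintype.card F : ℂ))⁻¹ * (G.card : ℂ) ^ 2 -
        ((Fintype.card F : ℂ) ^ (2 * k + 2))⁻¹ * ((Fintype.card F : ℂ) - 1) *
          ∑ x ∈ Finset.univ.filter (fun x : Fin (4 * k + 2) → F => ∑ i, x i * x i = 0),
            ((‖∑ m ∈ G, χ (-∑ i, x i * m i)‖ : ℝ) : ℂ) ^ 2 +
        ((Fintype.card F : ℂ) ^ (2 * k + 2))⁻¹ *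
          ∑ x ∈ Finset.univ.filter (fun x : Fin (4 * k + 2) → F => ∑ i, x i * x i ≠ 0),
            ((‖∑ m ∈ G, χ (-∑ i, x i * m i)‖ : ℝ) : ℂ) ^ 2 =
      (((G ×ˢ G).filter
          (fun mm : (Fin (4 * k + 2) → F) × (Fin (4 * k + 2) → F) =>
            ∑ i, (mm.1 i - mm.2 i) * (mm.1 i - mm.2 i) = 0)).card : ℂ) := by
    have hA : ∑ x ∈ Finset.univ.filter (fun x : Fin (4 * k + 2) → F => ∑ i, x i * x i = 0),
        ((‖∑ m ∈ G, χ (-∑ i, x i * m i)‖ : ℝ) : ℂ) ^ 2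
        = ∑ p ∈ G ×ˢ G,
            ∑ x ∈ Finset.univ.filter (fun x : Fin (4 * k + 2) → F => ∑ i, x i * x i = 0),
              χ (-∑ i, x i * (p.1 i - p.2 i)) := by
      rw [Finset.sum_congr rfl fun x _ => key x, Finset.sum_comm]
    have hB : ∑ x ∈ Finset.univ.filter (fun x : Fin (4 * k + 2) → F => ∑ i, x i * x i ≠ 0),
        ((‖∑ m ∈ G, χ (-∑ i, x i * m i)‖ : ℝ) : ℂ) ^ 2
        = ∑ p ∈ G ×ˢ G,
            ∑ x ∈ Finset.univ.filter (fun x : Fin (4 * k + 2) → F => ¬(∑ i, x i * x i = 0)),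
              χ (-∑ i, x i * (p.1 i - p.2 i)) := by
      rw [Finset.sum_congr rfl fun x _ => key x, Finset.sum_comm]
    have hcardsq : ((Fintype.card F : ℂ))⁻¹ * (G.card : ℂ) ^ 2
        = ∑ _p ∈ G ×ˢ G, ((Fintype.card F : ℂ))⁻¹ := by
      rw [Finset.sum_const, Finset.card_product, nsmul_eq_mul]
      push_cast
      ring
    rw [hA, hB, hcardsq, Finset.mul_sum, Finset.mul_sum, ← Finset.sum_sub_distrib,
      ← Finset.sum_add_distrib]
    have hpt : ∀ p ∈ G ×ˢ G, ((Fintype.card F : ℂ))⁻¹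
        - ((Fintype.card F : ℂ) ^ (2 * k + 2))⁻¹ * ((Fintype.card F : ℂ) - 1) *
            ∑ x ∈ Finset.univ.filter (fun x : Fin (4 * k + 2) → F => ∑ i, x i * x i = 0),
              χ (-∑ i, x i * (p.1 i - p.2 i))
        + ((Fintype.card F : ℂ) ^ (2 * k + 2))⁻¹ *
            ∑ x ∈ Finset.univ.filter (fun x : Fin (4 * k + 2) → F => ¬(∑ i, x i * x i = 0)),
              χ (-∑ i, x i * (p.1 i - p.2 i))
        = if (∑ i, (p.1 i - p.2 i) * (p.1 i - p.2 i)) = 0 then (1 : ℂ) else 0 := by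
      intro p _
      exact pointwise χ hχ hq k (fun i => p.1 i - p.2 i)
    rw [Finset.sum_congr rfl hpt, Finset.sum_boole]
  -- back to the reals
  have h1 : ((Fintype.card F : ℝ))⁻¹ * (G.card : ℝ) ^ 2 -
        ((Fintype.card F : ℝ) ^ (2 * k + 2))⁻¹ * ((Fintype.card F : ℝ) - 1) *
          ∑ x ∈ Finset.univ.filter (fun x : Fin (4 * k + 2) → F => ∑ i, x i * x i = 0),
            ‖∑ m ∈ G, χ (-∑ i, x i * m i)‖ ^ 2 +
        ((Fintype.card F : ℝ) ^ (2 * k + 2))⁻¹ *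
          ∑ x ∈ Finset.univ.filter (fun x : Fin (4 * k + 2) → F => ∑ i, x i * x i ≠ 0),
            ‖∑ m ∈ G, χ (-∑ i, x i * m i)‖ ^ 2 =
      ((G ×ˢ G).filter
          (fun mm : (Fin (4 * k + 2) → F) × (Fin (4 * k + 2) → F) =>
            ∑ i, (mm.1 i - mm.2 i) * (mm.1 i - mm.2 i) = 0)).card := by
    apply Complex.ofReal_injective
    push_cast
    exact main
  exact ⟨h1, h1 ▸ Nat.cast_nonneg _⟩
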